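/- For the dense VR-TOS iteration, let E denote the conditional expectation over the uniformly sampled index i at iteration t and x* a minimizer of the primal objective. Then for any η > 0, the gradient estimator v_t = ∇ψ_i(z_t) − α_{i,t} + ᾱ_t + ∇ω(z_t) satisfies E‖v_t − ∇f(z_t)‖² ≤ (1 + η)·E‖∇f_i(z_t) − ∇f_i(x*)‖² + 2(1 + η⁻¹)·L_f·H_t, where f_i = ψ_i + ω. -/

import Mathlib

open Finset
open scoped RealInnerProductSpace

noncomputable section

variable {E : Type*} [NormedAddCommGroup E] [InnerProductSpace ℝ E] [CompleteSpace E]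

lemma hasDerivAt_line (g : E → ℝ) (G : E → E) (hg : ∀ w, HasGradientAt g (G w) w)
    (x y : E) (t : ℝ) :
    HasDerivAt (fun s : ℝ => g (x + s • (y - x))) ⟪G (x + t • (y - x)), y - x⟫ t := by
  have hc : HasDerivAt (fun s : ℝ => x + s • (y - x)) (y - x) t := by
    simpa using ((hasDerivAt_id t).smul_const (y - x)).const_add x
  have h2 := (hg (x + t • (y - x))).hasFDerivAt.comp_hasDerivAt t hc
  simpa [InnerProductSpace.toDual_apply_apply, Function.comp_def] using h2

lemma convex_first_order (g : E → ℝ) (G : E → E) (hconv : ConvexOn ℝ Set.univ g)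
    (hg : ∀ w, HasGradientAt g (G w) w) (x y : E) :
    g y + ⟪G y, x - y⟫ ≤ g x := by
  have hconvφ : ConvexOn ℝ Set.univ (fun s : ℝ => g (y + s • (x - y))) := by
    have h := hconv.comp_affineMap (AffineMap.lineMap y x : ℝ →ᵃ[ℝ] E)
    have heq : (g ∘ ⇑(AffineMap.lineMap y x)) = fun s : ℝ => g (y + s • (x - y)) := by
      funext s
      simp [AffineMap.lineMap_apply]
      rw [add_comm]
    simpa [heq] using h
  have hd : HasDerivAt (fun s : ℝ => g (y + s • (x - y))) ⟪G y, x - y⟫ 0 := by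
    simpa using hasDerivAt_line g G hg y x 0
  have hs := hconvφ.le_slope_of_hasDerivAt (Set.mem_univ (0:ℝ)) (Set.mem_univ 1) one_pos hd
  simp [slope_def_field] at hs
  linarith

lemma descent_lemma (g : E → ℝ) (G : E → E) (L : ℝ)
    (hg : ∀ w, HasGradientAt g (G w) w)
    (hlip : ∀ a b, ‖G a - G b‖ ≤ L * ‖a - b‖) (x y : E) :
    g y ≤ g x + ⟪G x, y - x⟫ + L / 2 * ‖y - x‖ ^ 2 := by
  have hGcont : Continuous G := by
    have : LipschitzWith (Real.toNNReal L) G := by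
      apply LipschitzWith.of_dist_le_mul
      intro a b
      rw [dist_eq_norm, dist_eq_norm]
      refine (hlip a b).trans (mul_le_mul_of_nonneg_right ?_ (norm_nonneg _))
      exact Real.le_coe_toNNReal L
    exact this.continuous
  set φ' : ℝ → ℝ := fun t => ⟪G (x + t • (y - x)), y - x⟫ with hφ'
  have hc : Continuous φ' := by
    apply Continuous.inner
    · exact hGcont.comp (by continuity)
    · exact continuous_const
  have hftc : ∫ t in (0:ℝ)..1, φ' t = g y - g x := by
    have := intervalIntegral.integral_eq_sub_of_hasDerivAt
      (f := fun s : ℝ => g (x + s • (y - x))) (f' := φ')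
      (fun t _ => hasDerivAt_line g G hg x y t) (hc.intervalIntegrable 0 1)
    simpa using this
  have hb : ∀ t ∈ Set.Icc (0:ℝ) 1, φ' t ≤ ⟪G x, y - x⟫ + (L * ‖y - x‖ ^ 2) * t := by
    intro t ht
    have h1 : φ' t - ⟪G x, y - x⟫ = ⟪G (x + t • (y - x)) - G x, y - x⟫ := by
      rw [inner_sub_left]
    have h2 : ⟪G (x + t • (y - x)) - G x, y - x⟫ ≤ ‖G (x + t • (y - x)) - G x‖ * ‖y - x‖ :=
      real_inner_le_norm _ _
    have h3 : ‖G (x + t • (y - x)) - G x‖ ≤ L * (t * ‖y - x‖) := by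
      have := hlip (x + t • (y - x)) x
      simpa [norm_smul, abs_of_nonneg ht.1] using this
    have h4 : ‖G (x + t • (y - x)) - G x‖ * ‖y - x‖ ≤ L * (t * ‖y - x‖) * ‖y - x‖ :=
      mul_le_mul_of_nonneg_right h3 (norm_nonneg _)
    nlinarith [norm_nonneg (y - x)]
  have hint : ∫ t in (0:ℝ)..1, φ' t ≤ ∫ t in (0:ℝ)..1, (⟪G x, y - x⟫ + (L * ‖y - x‖ ^ 2) * t) := by
    apply intervalIntegral.integral_mono_on zero_le_one (hc.intervalIntegrable 0 1)
    · exact ((continuous_const.add (continuous_const.mul continuous_id)).intervalIntegrable 0 1)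
    · exact hb
  have hval : ∫ t in (0:ℝ)..1, (⟪G x, y - x⟫ + (L * ‖y - x‖ ^ 2) * t)
      = ⟪G x, y - x⟫ + L / 2 * ‖y - x‖ ^ 2 := by
    rw [intervalIntegral.integral_add (f := fun _ => ⟪G x, y - x⟫)
      (g := fun t => L * ‖y - x‖ ^ 2 * t) (continuous_const.intervalIntegrable 0 1)
      ((continuous_const.mul continuous_id').intervalIntegrable 0 1),
      intervalIntegral.integral_const_mul, integral_id]
    simp
    ring
  rw [hftc] at hint
  rw [hval] at hint
  linarith

lemma coco (g : E → ℝ) (G : E → E) (L : ℝ) (hL : 0 < L)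
    (hconv : ConvexOn ℝ Set.univ g)
    (hg : ∀ w, HasGradientAt g (G w) w)
    (hlip : ∀ a b, ‖G a - G b‖ ≤ L * ‖a - b‖) (x y : E) :
    ‖G x - G y‖ ^ 2 ≤ 2 * L * (g x - g y - ⟪G y, x - y⟫) := by
  set d : E := -(L⁻¹ • (G x - G y)) with hd
  have h1 := descent_lemma g G L hg hlip x (x + d)
  have h2 := convex_first_order g G hconv hg (x + d) y
  have e1 : x + d - x = d := by abel
  rw [e1] at h1
  have i1 : ⟪G y, x + d - y⟫ = ⟪G y, x - y⟫ + ⟪G y, d⟫ := by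
    rw [show x + d - y = (x - y) + d by abel, inner_add_right]
  rw [i1] at h2
  set N := ‖G x - G y‖ ^ 2 with hN
  have i2 : ⟪G x, d⟫ - ⟪G y, d⟫ = -(L⁻¹ * N) := by
    rw [← inner_sub_left, hd, inner_neg_right, real_inner_smul_right,
      real_inner_self_eq_norm_sq]
  have i3 : ‖d‖ ^ 2 = L⁻¹ ^ 2 * N := by
    rw [hd, norm_neg, norm_smul, mul_pow]
    congr 1
    rw [Real.norm_eq_abs, abs_of_pos (inv_pos.2 hL), sq]
  rw [i3] at h1
  have key : L⁻¹ * N - L / 2 * (L⁻¹ ^ 2 * N) ≤ g x - g y - ⟪G y, x - y⟫ := by linarith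
  have hcalc : 2 * L * (L⁻¹ * N - L / 2 * (L⁻¹ ^ 2 * N)) = N := by
    field_simp
    ring
  calc N = 2 * L * (L⁻¹ * N - L / 2 * (L⁻¹ ^ 2 * N)) := hcalc.symm
    _ ≤ 2 * L * (g x - g y - ⟪G y, x - y⟫) :=
        mul_le_mul_of_nonneg_left key (by linarith)

lemma young_ineq (u w : E) (η : ℝ) (hη : 0 < η) :
    ‖u + w‖ ^ 2 ≤ (1 + η) * ‖u‖ ^ 2 + (1 + η⁻¹) * ‖w‖ ^ 2 := by
  have h := norm_add_sq_real u w
  have h2 : ⟪u, w⟫ ≤ ‖u‖ * ‖w‖ := real_inner_le_norm u w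
  have hη' : 0 < η⁻¹ := inv_pos.2 hη
  have hc : η * η⁻¹ = 1 := mul_inv_cancel₀ hη.ne'
  nlinarith [sq_nonneg (η * ‖u‖ - ‖w‖), sq_nonneg ‖u‖, sq_nonneg ‖w‖, norm_nonneg u, norm_nonneg w]

lemma variance_le {n : ℕ} (hn : 0 < n) (d : Fin n → E) :
    ∑ i, ‖d i - (n:ℝ)⁻¹ • ∑ j, d j‖ ^ 2 ≤ ∑ i, ‖d i‖ ^ 2 := by
  have hnR : (0:ℝ) < n := by exact_mod_cast hn
  set s : E := (n:ℝ)⁻¹ • ∑ j, d j with hs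
  have hsum : ∑ j, d j = (n:ℝ) • s := by
    rw [hs, smul_smul, mul_inv_cancel₀ hnR.ne', one_smul]
  have expand : ∀ i : Fin n, ‖d i - s‖ ^ 2 = ‖d i‖ ^ 2 - 2 * ⟪d i, s⟫ + ‖s‖ ^ 2 :=
    fun i => norm_sub_sq_real (d i) s
  have h1 : ∑ i, ‖d i - s‖ ^ 2
      = ∑ i, ‖d i‖ ^ 2 - 2 * ⟪∑ i, d i, s⟫ + (n:ℝ) * ‖s‖ ^ 2 := by
    rw [Finset.sum_congr rfl (fun i _ => expand i), Finset.sum_add_distrib,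
      Finset.sum_sub_distrib, sum_inner, Finset.sum_const, Finset.card_univ,
      Fintype.card_fin, ← Finset.mul_sum, nsmul_eq_mul]
  have h2 : ⟪∑ i, d i, s⟫ = (n:ℝ) * ‖s‖ ^ 2 := by
    rw [hsum, real_inner_smul_left, real_inner_self_eq_norm_sq]
  rw [h1, h2]
  nlinarith [sq_nonneg ‖s‖, hnR]


section Main
variable {p : ℕ}




/-- proper, lower semicontinuous, convex extended-real function. -/
structure ProperLscConvex (g : EuclideanSpace ℝ (Fin p) → EReal) : Prop where
  proper : ∃ x, g x ≠ ⊤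
  ne_bot : ∀ x, g x ≠ ⊥
  lsc : LowerSemicontinuous g
  convex : ∀ x y : EuclideanSpace ℝ (Fin p), ∀ a b : ℝ, 0 ≤ a → 0 ≤ b → a + b = 1 →
    g (a • x + b • y) ≤ (a : EReal) * g x + (b : EReal) * g y

/-- The Bregman divergence of a differentiable convex function. -/
def bregman (f : EuclideanSpace ℝ (Fin p) → ℝ)
    (gradf : EuclideanSpace ℝ (Fin p) → EuclideanSpace ℝ (Fin p))
    (x y : EuclideanSpace ℝ (Fin p)) : ℝ :=
  f x - f y - ⟪gradf y, x - y⟫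

set_option maxHeartbeats 1000000 in
/-- bound on gradient-estimate variance, dense variant.  Conditioned on the
past (so the current point `z = z_t` and the memory `α j = α_{j,t}`, `m j = m_{j,t}` are fixed),
the dense VR-TOS estimator `v_i = ∇ψ_i(z) − α_i + ᾱ + ∇ω(z)` satisfies, for every `η > 0`,
`E‖v − ∇f(z)‖² ≤ (1+η) E‖∇f_i(z) − ∇f_i(x*)‖² + 2(1+η⁻¹) L_f H_t`. -/
theorem dense_variance_bound
    {n : ℕ} (hn : 0 < n)
    (ψ : Fin n → EuclideanSpace ℝ (Fin p) → ℝ)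
    (gradψ : Fin n → EuclideanSpace ℝ (Fin p) → EuclideanSpace ℝ (Fin p))
    (Lψ : ℝ)
    (hψconv : ∀ i, ConvexOn ℝ Set.univ (ψ i))
    (hψdiff : ∀ i x, HasGradientAt (ψ i) (gradψ i x) x)
    (hψlip : ∀ i x y, ‖gradψ i x - gradψ i y‖ ≤ Lψ * ‖x - y‖)
    (ω : EuclideanSpace ℝ (Fin p) → ℝ)
    (gradω : EuclideanSpace ℝ (Fin p) → EuclideanSpace ℝ (Fin p))
    (Lω : ℝ)
    (hωconv : ConvexOn ℝ Set.univ ω)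
    (hωdiff : ∀ x, HasGradientAt ω (gradω x) x)
    (hωlip : ∀ x y, ‖gradω x - gradω y‖ ≤ Lω * ‖x - y‖)
    (Lf : ℝ) (hLf : Lf = Lψ + Lω) (hLfpos : 0 < Lf)
    -- summands `f_i = ψ_i + ω` and the full smooth term `f`
    (fj : Fin n → EuclideanSpace ℝ (Fin p) → ℝ)
    (hfj : ∀ j x, fj j x = ψ j x + ω x)
    (gradfj : Fin n → EuclideanSpace ℝ (Fin p) → EuclideanSpace ℝ (Fin p))
    (hgradfj : ∀ j x, gradfj j x = gradψ j x + gradω x)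
    (f : EuclideanSpace ℝ (Fin p) → ℝ)
    (hf : ∀ x, f x = (n : ℝ)⁻¹ * ∑ j, ψ j x + ω x)
    (gradf : EuclideanSpace ℝ (Fin p) → EuclideanSpace ℝ (Fin p))
    (hgradf : ∀ x, gradf x = (n : ℝ)⁻¹ • ∑ j, gradψ j x + gradω x)
    -- the nonsmooth terms and a minimizer `x*` of the primal objective
    (g h : EuclideanSpace ℝ (Fin p) → EReal)
    (hg : ProperLscConvex g) (hh : ProperLscConvex h)
    (xstar : EuclideanSpace ℝ (Fin p))
    (hxstar : ∀ x, ((f xstar : ℝ) : EReal) + g xstar + h xstar ≤ ((f x : ℝ) : EReal) + g x + h x)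
    -- current state: point `z`, stored gradients `α`, memory-Lyapunov values `m`, `H_t`
    (z : EuclideanSpace ℝ (Fin p))
    (α : Fin n → EuclideanSpace ℝ (Fin p)) (m : Fin n → ℝ)
    -- the structural invariant of the memory: each `m j` is either still at its initial
    -- value `(1/(2L_f))‖α_j − ∇ψ_j(x*)‖²`, or `α_j = ∇ψ_j(φ)` and `m j = B_{f_j}(φ, x*)`
    -- for the iterate `φ` at which the memory was last updated
    (hstruct : ∀ j, m j = 1 / (2 * Lf) * ‖α j - gradψ j xstar‖ ^ 2 ∨
      ∃ φ, α j = gradψ j φ ∧ m j = bregman (fj j) (gradfj j) φ xstar)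
    (Ht : ℝ) (hHt : Ht = (n : ℝ)⁻¹ * ∑ j, m j)
    -- the gradient estimator
    (v : Fin n → EuclideanSpace ℝ (Fin p))
    (hv : ∀ i, v i = gradψ i z - α i + (n : ℝ)⁻¹ • ∑ j, α j + gradω z) :
    ∀ η : ℝ, 0 < η →
      (n : ℝ)⁻¹ * ∑ i, ‖v i - gradf z‖ ^ 2
        ≤ (1 + η) * ((n : ℝ)⁻¹ * ∑ i, ‖gradfj i z - gradfj i xstar‖ ^ 2)
          + 2 * (1 + η⁻¹) * Lf * Ht := by
  intro η hη
  have hnR : (0:ℝ) < n := by exact_mod_cast hn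
  have hη' : 0 < η⁻¹ := inv_pos.2 hη
  set b : Fin n → EuclideanSpace ℝ (Fin p) := fun i => gradfj i z - gradfj i xstar with hbdef
  set e : Fin n → EuclideanSpace ℝ (Fin p) := fun i => gradψ i xstar - α i with hedef
  set d : Fin n → EuclideanSpace ℝ (Fin p) := fun i => b i + e i with hddef
  have hdj : ∀ j, d j = (gradψ j z - α j) + (gradω z - gradω xstar) := by
    intro j
    simp only [hddef, hbdef, hedef, hgradfj]
    abel
  have hstep1 : ∀ i, v i - gradf z = d i - (n:ℝ)⁻¹ • ∑ j, d j := by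
    intro i
    have hsd : ∑ j, d j = (∑ j, gradψ j z - ∑ j, α j) + (n:ℝ) • (gradω z - gradω xstar) := by
      rw [Finset.sum_congr rfl (fun j _ => hdj j), Finset.sum_add_distrib,
        Finset.sum_sub_distrib, Finset.sum_const, Finset.card_univ, Fintype.card_fin]
      congr 1
      rw [← Nat.cast_smul_eq_nsmul ℝ]
    rw [hv i, hgradf z, hdj i, hsd]
    rw [smul_add, smul_smul, inv_mul_cancel₀ hnR.ne', one_smul, smul_sub]
    abel
  -- the per-index memory bound, plus nonnegativity facts
  rcases subsingleton_or_nontrivial (EuclideanSpace ℝ (Fin p)) with hsub | hnt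
  · -- trivial space: LHS is zero, RHS is nonneg
    have hz0 : ∀ w : EuclideanSpace ℝ (Fin p), w = 0 := fun w => Subsingleton.elim w 0
    have hL0 : (n : ℝ)⁻¹ * ∑ i, ‖v i - gradf z‖ ^ 2 = 0 := by
      have : ∀ i : Fin n, ‖v i - gradf z‖ ^ 2 = 0 := by
        intro i; rw [hz0 (v i - gradf z), norm_zero]; ring
      rw [Finset.sum_congr rfl (fun i _ => this i), Finset.sum_const]
      simp
    rw [hL0]
    have hm0 : ∀ j, 0 ≤ m j := by
      intro j
      rcases hstruct j with h1 | ⟨φ, hα, hm⟩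
      · rw [h1, hz0 (α j - gradψ j xstar)]
        simp
      · rw [hm, Subsingleton.elim φ xstar]
        simp [bregman]
    have hHt0 : 0 ≤ Ht := by
      rw [hHt]
      exact mul_nonneg (by positivity) (Finset.sum_nonneg fun j _ => hm0 j)
    have t1 : 0 ≤ (1 + η) * ((n : ℝ)⁻¹ * ∑ i, ‖gradfj i z - gradfj i xstar‖ ^ 2) := by
      apply mul_nonneg (by linarith)
      exact mul_nonneg (by positivity) (Finset.sum_nonneg fun i _ => by positivity)
    have t2 : 0 ≤ 2 * (1 + η⁻¹) * Lf * Ht := by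
      apply mul_nonneg (mul_nonneg (by linarith) hLfpos.le) hHt0
    linarith
  · -- nontrivial space: Lψ and Lω are nonneg
    obtain ⟨x₀, x₁, hx01⟩ := exists_pair_ne (EuclideanSpace ℝ (Fin p))
    have hc : 0 < ‖x₀ - x₁‖ := by
      rw [norm_pos_iff]
      exact sub_ne_zero_of_ne hx01
    have hLψ0 : 0 ≤ Lψ := by
      have := hψlip ⟨0, hn⟩ x₀ x₁
      nlinarith [norm_nonneg (gradψ ⟨0, hn⟩ x₀ - gradψ ⟨0, hn⟩ x₁)]
    have hLω0 : 0 ≤ Lω := by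
      have := hωlip x₀ x₁
      nlinarith [norm_nonneg (gradω x₀ - gradω x₁)]
    have hmem : ∀ j, ‖e j‖ ^ 2 ≤ 2 * Lf * m j := by
      intro j
      rcases hstruct j with h1 | ⟨φ, hα, hm⟩
      · rw [h1]
        simp only [hedef]
        have hrev : ‖gradψ j xstar - α j‖ = ‖α j - gradψ j xstar‖ := norm_sub_rev _ _
        simp only [hrev]
        rw [show 2 * Lf * (1 / (2 * Lf) * ‖α j - gradψ j xstar‖ ^ 2)
            = (2 * Lf) * (2 * Lf)⁻¹ * ‖α j - gradψ j xstar‖ ^ 2 by ring,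
          mul_inv_cancel₀ (by positivity), one_mul]
      · have hBψ0 : 0 ≤ ψ j φ - ψ j xstar - ⟪gradψ j xstar, φ - xstar⟫ := by
          have := convex_first_order (ψ j) (gradψ j) (hψconv j) (hψdiff j) φ xstar
          linarith
        have hBω0 : 0 ≤ ω φ - ω xstar - ⟪gradω xstar, φ - xstar⟫ := by
          have := convex_first_order ω gradω hωconv hωdiff φ xstar
          linarith
        have hbreg : bregman (fj j) (gradfj j) φ xstar
            = (ψ j φ - ψ j xstar - ⟪gradψ j xstar, φ - xstar⟫)
              + (ω φ - ω xstar - ⟪gradω xstar, φ - xstar⟫) := by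
          simp only [bregman, hfj, hgradfj, inner_add_left]
          ring
        rw [hm, hbreg]
        simp only [hedef]
        rw [hα]
        have hrev : ‖gradψ j xstar - gradψ j φ‖ = ‖gradψ j φ - gradψ j xstar‖ :=
          norm_sub_rev _ _
        simp only [hrev]
        rcases hLψ0.lt_or_eq with hLψpos | hLψzero
        · have hcoco := coco (ψ j) (gradψ j) Lψ hLψpos (hψconv j) (hψdiff j)
            (fun a b => hψlip j a b) φ xstar
          nlinarith [hLfpos]
        · have h0 : ‖gradψ j φ - gradψ j xstar‖ = 0 := by
            have := hψlip j φ xstar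
            rw [← hLψzero] at this
            simp at this
            rw [this, norm_zero]
          rw [h0]
          nlinarith [hLfpos]
    calc (n : ℝ)⁻¹ * ∑ i, ‖v i - gradf z‖ ^ 2
        = (n : ℝ)⁻¹ * ∑ i, ‖d i - (n:ℝ)⁻¹ • ∑ j, d j‖ ^ 2 := by
          rw [Finset.sum_congr rfl (fun i _ => by rw [hstep1 i])]
      _ ≤ (n : ℝ)⁻¹ * ∑ i, ‖d i‖ ^ 2 :=
          mul_le_mul_of_nonneg_left (variance_le hn d) (by positivity)
      _ ≤ (n : ℝ)⁻¹ * ∑ i, ((1 + η) * ‖b i‖ ^ 2 + (1 + η⁻¹) * ‖e i‖ ^ 2) := by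
          apply mul_le_mul_of_nonneg_left _ (by positivity)
          exact Finset.sum_le_sum fun i _ => young_ineq (b i) (e i) η hη
      _ = (1 + η) * ((n : ℝ)⁻¹ * ∑ i, ‖b i‖ ^ 2)
            + (1 + η⁻¹) * ((n : ℝ)⁻¹ * ∑ i, ‖e i‖ ^ 2) := by
          rw [Finset.sum_add_distrib, ← Finset.mul_sum, ← Finset.mul_sum]
          ring
      _ ≤ (1 + η) * ((n : ℝ)⁻¹ * ∑ i, ‖b i‖ ^ 2)
            + (1 + η⁻¹) * ((n : ℝ)⁻¹ * ∑ i, 2 * Lf * m i) := by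
          apply add_le_add le_rfl
          apply mul_le_mul_of_nonneg_left _ (by linarith)
          apply mul_le_mul_of_nonneg_left _ (by positivity)
          exact Finset.sum_le_sum fun i _ => hmem i
      _ = (1 + η) * ((n : ℝ)⁻¹ * ∑ i, ‖b i‖ ^ 2) + 2 * (1 + η⁻¹) * Lf * Ht := by
          rw [hHt, show (∑ i, 2 * Lf * m i : ℝ) = 2 * Lf * ∑ i, m i by
            rw [Finset.mul_sum]]
          ring


end Main
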